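/- Let u, v be words over A with |v| ≤ |u|. Then: (1) binom_q(u,v) has degree at most |v|·(|u|−|v|); (2) the coefficient of q^{|v|(|u|−|v|)} in binom_q(u,v) equals 1 if v is a prefix of u and equals 0 otherwise; (3) the constant coefficient of binom_q(u,v) equals 1 if v is a suffix of u and equals 0 otherwise; (4) if v occurs as a subword of u, then the leading coefficient of binom_q(u,v) equals 1 and the lowest-degree nonzero coefficient of binom_q(u,v) equals 1. -/

import Mathlib

noncomputable def qbinAux {A : Type*} [DecidableEq A] : List A → List A → Polynomial ℕ
  | _, [] => 1
  | [], _ :: _ => 0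
  | a :: u, b :: v =>
      Polynomial.X ^ (v.length + 1) * qbinAux u (b :: v) +
        (if a = b then qbinAux u v else 0)

/-- The `q`-binomial coefficient `binom_q(u,v)` of two words. -/
noncomputable def qbin {A : Type*} [DecidableEq A] (u v : List A) : Polynomial ℕ :=
  qbinAux u.reverse v.reverse

namespace QbinProof
open Polynomial List
variable {A : Type*} [DecidableEq A]

@[simp] lemma qbinAux_nil (x : List A) : qbinAux x [] = 1 := by cases x <;> rfl
@[simp] lemma qbinAux_nil_cons (b : A) (v : List A) : qbinAux [] (b :: v) = 0 := rfl
lemma qbinAux_cons_cons (a b : A) (u v : List A) :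
    qbinAux (a :: u) (b :: v) =
      X ^ (v.length + 1) * qbinAux u (b :: v) + (if a = b then qbinAux u v else 0) := rfl

-- ℕ[X] helpers
lemma coeff_ne_zero_add_left {f g : Polynomial ℕ} {n : ℕ} (h : f.coeff n ≠ 0) :
    (f + g).coeff n ≠ 0 := by
  simp only [coeff_add]; omega

lemma add_ne_zero_left {f g : Polynomial ℕ} (hf : f ≠ 0) : f + g ≠ 0 := by
  have hn : f.coeff f.natDegree ≠ 0 := Polynomial.leadingCoeff_ne_zero.2 hf
  exact fun h0 => coeff_ne_zero_add_left (g := g) hn (by simp [h0])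

lemma natDegree_le_add_left {f g : Polynomial ℕ} (hf : f ≠ 0) :
    f.natDegree ≤ (f + g).natDegree :=
  le_natDegree_of_ne_zero (coeff_ne_zero_add_left (Polynomial.leadingCoeff_ne_zero.2 hf))

lemma natDegree_le_add_right {f g : Polynomial ℕ} (hg : g ≠ 0) :
    g.natDegree ≤ (f + g).natDegree := by
  rw [add_comm]; exact natDegree_le_add_left hg

lemma ntd_add_le_left {f g : Polynomial ℕ} (hf : f ≠ 0) :
    (f + g).natTrailingDegree ≤ f.natTrailingDegree :=
  natTrailingDegree_le_of_ne_zero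
    (coeff_ne_zero_add_left (trailingCoeff_eq_zero.not.2 hf))

lemma ntd_add_le_right {f g : Polynomial ℕ} (hg : g ≠ 0) :
    (f + g).natTrailingDegree ≤ g.natTrailingDegree := by
  rw [add_comm]; exact ntd_add_le_left hg

lemma le_ntd_add {f g : Polynomial ℕ} {n : ℕ} (hne : f + g ≠ 0)
    (hf : ∀ m < n, f.coeff m = 0) (hg : ∀ m < n, g.coeff m = 0) :
    n ≤ (f + g).natTrailingDegree :=
  le_natTrailingDegree hne (fun m hm => by simp [coeff_add, hf m hm, hg m hm])

@[simp] lemma trailingCoeff_X_pow (k : ℕ) : (X ^ k : Polynomial ℕ).trailingCoeff = 1 := by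
  simp [trailingCoeff, natTrailingDegree_X_pow, coeff_X_pow]

lemma tc_X_pow_mul {f : Polynomial ℕ} (k : ℕ) (hf : f ≠ 0) :
    (X ^ k * f).trailingCoeff = f.trailingCoeff := by
  have h := natTrailingDegree_mul' (p := (X ^ k : Polynomial ℕ)) (q := f)
    (by simp [trailingCoeff_eq_zero.not.2 hf])
  rw [trailingCoeff, h, natTrailingDegree_X_pow, add_comm k, coeff_X_pow_mul, trailingCoeff]

lemma ntd_X_pow_mul {f : Polynomial ℕ} (k : ℕ) (hf : f ≠ 0) :
    (X ^ k * f).natTrailingDegree = k + f.natTrailingDegree := by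
  have h := natTrailingDegree_mul' (p := (X ^ k : Polynomial ℕ)) (q := f)
    (by simp [trailingCoeff_eq_zero.not.2 hf])
  rw [h, natTrailingDegree_X_pow]

lemma tc_add_of_lt {f g : Polynomial ℕ} (hg : g ≠ 0)
    (h : g.natTrailingDegree < f.natTrailingDegree) :
    (f + g).trailingCoeff = g.trailingCoeff := by
  have hfz : f.coeff g.natTrailingDegree = 0 := coeff_eq_zero_of_lt_natTrailingDegree h
  have hcoeff : (f + g).coeff g.natTrailingDegree = g.trailingCoeff := by
    rw [coeff_add, hfz, zero_add, trailingCoeff]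
  have hne : f + g ≠ 0 := fun h0 => trailingCoeff_eq_zero.not.2 hg (by simp [h0] at hcoeff; omega)
  have h1 : (f + g).natTrailingDegree ≤ g.natTrailingDegree :=
    natTrailingDegree_le_of_ne_zero (by rw [hcoeff]; exact trailingCoeff_eq_zero.not.2 hg)
  have h2 : g.natTrailingDegree ≤ (f + g).natTrailingDegree :=
    le_ntd_add hne (fun m hm => coeff_eq_zero_of_lt_natTrailingDegree (hm.trans h))
      (fun m hm => coeff_eq_zero_of_lt_natTrailingDegree hm)
  rw [trailingCoeff, le_antisymm h1 h2, hcoeff]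

-- zero iff not sublist
lemma qbinAux_eq_zero : ∀ {x y : List A}, ¬ y <+ x → qbinAux x y = 0 := by
  intro x
  induction x with
  | nil => intro y h; cases y with
    | nil => exact absurd (List.nil_sublist _) h
    | cons b v => rfl
  | cons a u ih =>
    intro y h
    cases y with
    | nil => exact absurd (List.nil_sublist _) h
    | cons b v =>
      rw [qbinAux_cons_cons]
      have h1 : ¬ (b :: v) <+ u := fun hs => h (hs.cons a)
      rw [ih h1, mul_zero, zero_add]
      split
      · next hab =>
        have h2 : ¬ v <+ u := fun hs => h (hab ▸ hs.cons₂ b)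
        exact ih h2
      · rfl

lemma qbinAux_ne_zero : ∀ {x y : List A}, y <+ x → qbinAux x y ≠ 0 := by
  intro x
  induction x with
  | nil => intro y h; rw [List.sublist_nil.1 h]; simp
  | cons a u ih =>
    intro y h
    cases y with
    | nil => simp
    | cons b v =>
      rw [qbinAux_cons_cons]
      cases h with
      | cons _ h' =>
        exact add_ne_zero_left (mul_ne_zero (pow_ne_zero _ X_ne_zero) (ih h'))
      | cons_cons _ h' =>
        rw [add_comm]
        exact add_ne_zero_left (by simpa using ih h')

lemma sublist_of_qbinAux_ne_zero {x y : List A} (h : qbinAux x y ≠ 0) : y <+ x :=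
  by_contra fun hc => h (qbinAux_eq_zero hc)


-- Part 1: degree bound
lemma natDegree_qbinAux_le : ∀ (x y : List A), y.length ≤ x.length →
    (qbinAux x y).natDegree ≤ y.length * (x.length - y.length) := by
  intro x
  induction x with
  | nil => intro y h; cases y with
    | nil => simp
    | cons b v => simp at h
  | cons a u ih =>
    intro y h
    cases y with
    | nil => simp
    | cons b v =>
      rw [qbinAux_cons_cons]
      refine (natDegree_add_le _ _).trans (max_le ?_ ?_)
      · by_cases hk : v.length + 1 ≤ u.length
        · refine (natDegree_mul_le).trans ?_
          have h1 := ih (b :: v) hk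
          have h2 : (X : Polynomial ℕ).natDegree = 1 := natDegree_X
          have h3 : ((X : Polynomial ℕ) ^ (v.length + 1)).natDegree ≤ v.length + 1 := by
            simpa using natDegree_pow_le (p := (X : Polynomial ℕ)) (n := v.length + 1)
          have h4 : (v.length + 1) * (u.length + 1 - (v.length + 1))
              = (v.length + 1) * (u.length - (v.length + 1)) + (v.length + 1) := by
            rw [Nat.succ_sub hk, Nat.mul_succ]
          simp only [List.length_cons] at h1 ⊢
          rw [h4]
          omega
        · have h0 : qbinAux u (b :: v) = 0 := qbinAux_eq_zero
            (fun hs => hk (by simpa using hs.length_le))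
          simp [h0]
      · have h2 : v.length ≤ u.length := by simpa using h
        have h1 := ih v h2
        have h5 : v.length * (u.length - v.length) ≤
            (v.length + 1) * (u.length + 1 - (v.length + 1)) := by
          have : u.length - v.length = u.length + 1 - (v.length + 1) := by omega
          rw [this]
          exact Nat.mul_le_mul_right _ (Nat.le_succ _)
        split
        · exact h1.trans h5
        · simp

-- Part 3 (aux orientation: constant coefficient vs prefix)
lemma coeff_zero_qbinAux : ∀ (x y : List A), y.length ≤ x.length →
    (qbinAux x y).coeff 0 = if y <+: x then 1 else 0 := by
  intro x
  induction x with
  | nil => intro y h; cases y with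
    | nil => simp
    | cons b v => simp at h
  | cons a u ih =>
    intro y h
    cases y with
    | nil => simp
    | cons b v =>
      rw [qbinAux_cons_cons, coeff_add, mul_coeff_zero]
      have hx : ((X : Polynomial ℕ) ^ (v.length + 1)).coeff 0 = 0 := by
        rw [coeff_X_pow]; simp
      rw [hx, zero_mul, zero_add]
      have h2 : v.length ≤ u.length := by simpa using h
      have hpre : (b :: v <+: a :: u) ↔ (a = b ∧ v <+: u) := by
        rw [List.cons_prefix_cons]; exact ⟨fun ⟨h1, h2⟩ => ⟨h1.symm, h2⟩, fun ⟨h1, h2⟩ => ⟨h1.symm, h2⟩⟩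
      by_cases hab : a = b
      · rw [if_pos hab, ih v h2]
        by_cases hvu : v <+: u
        · rw [if_pos hvu, if_pos (hpre.2 ⟨hab, hvu⟩)]
        · rw [if_neg hvu, if_neg (fun hc => hvu (hpre.1 hc).2)]
      · rw [if_neg hab, if_neg (fun hc => hab (hpre.1 hc).1), coeff_zero]

-- Part 2 (aux orientation: top coefficient vs suffix)
lemma coeff_top_qbinAux : ∀ (x y : List A), y.length ≤ x.length →
    (qbinAux x y).coeff (y.length * (x.length - y.length)) = if y <:+ x then 1 else 0 := by
  intro x
  induction x with
  | nil => intro y h; cases y with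
    | nil => simp
    | cons b v => simp at h
  | cons a u ih =>
    intro y h
    cases y with
    | nil => simp
    | cons b v =>
      rw [qbinAux_cons_cons, coeff_add]
      by_cases hk : v.length + 1 ≤ u.length
      · have h4 : (b :: v).length * ((a :: u).length - (b :: v).length)
            = (v.length + 1) * (u.length - (v.length + 1)) + (v.length + 1) := by
          simp only [List.length_cons]
          rw [Nat.succ_sub hk, Nat.mul_succ]
        have ihbv := ih (b :: v) hk
        simp only [List.length_cons] at ihbv
        rw [h4, coeff_X_pow_mul, ihbv]
        have hdeg : (if a = b then qbinAux u v else 0).coeff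
            ((v.length + 1) * (u.length - (v.length + 1)) + (v.length + 1)) = 0 := by
          have hb : (qbinAux u v).natDegree ≤ v.length * (u.length - v.length) :=
            natDegree_qbinAux_le u v (by omega)
          have hlt : v.length * (u.length - v.length) <
              (v.length + 1) * (u.length - (v.length + 1)) + (v.length + 1) := by
            have e1 : u.length - v.length = (u.length - (v.length + 1)) + 1 := by omega
            rw [e1, Nat.mul_succ]
            have : v.length * (u.length - (v.length + 1)) ≤
                (v.length + 1) * (u.length - (v.length + 1)) :=
              Nat.mul_le_mul_right _ (Nat.le_succ _)
            omega
          split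
          · exact coeff_eq_zero_of_natDegree_lt (lt_of_le_of_lt hb hlt)
          · simp
        rw [hdeg, add_zero]
        have hsuf : (b :: v <:+ a :: u) ↔ (b :: v <:+ u) := by
          rw [List.suffix_cons_iff]
          constructor
          · rintro (hc | hc)
            · exact absurd (congrArg List.length hc) (by simp; omega)
            · exact hc
          · exact Or.inr
        by_cases hs : (b :: v) <:+ u
        · rw [if_pos hs, if_pos (hsuf.2 hs)]
        · rw [if_neg hs, if_neg (fun hc => hs (hsuf.1 hc))]
      · have hl : u.length = v.length := by simp at h; omega
        have hD : (b :: v).length * ((a :: u).length - (b :: v).length) = 0 := by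
          simp; omega
        rw [hD, mul_coeff_zero]
        have hx : ((X : Polynomial ℕ) ^ (v.length + 1)).coeff 0 = 0 := by
          rw [coeff_X_pow]; simp
        rw [hx, zero_mul, zero_add]
        have ihv := ih v (le_of_eq hl.symm)
        have hD2 : v.length * (u.length - v.length) = 0 := by rw [hl, Nat.sub_self, Nat.mul_zero]
        rw [hD2] at ihv
        by_cases hab : a = b
        · rw [if_pos hab, ihv]
          by_cases hvu : v <:+ u
          · have heq : b :: v = a :: u := by rw [hvu.eq_of_length hl.symm, hab]
            rw [if_pos hvu, if_pos (show b :: v <:+ a :: u by exact heq ▸ List.suffix_rfl)]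
          · rw [if_neg hvu, if_neg]
            intro hc
            have heq : b :: v = a :: u := hc.eq_of_length (by simp [hl])
            obtain ⟨h1, h2⟩ := List.cons_eq_cons.mp heq
            exact hvu (h2 ▸ List.suffix_rfl)
        · rw [if_neg hab, if_neg, coeff_zero]
          intro hc
          have heq : b :: v = a :: u := hc.eq_of_length (by simp [hl])
          obtain ⟨h1, h2⟩ := List.cons_eq_cons.mp heq
          exact hab h1.symm


lemma degGap : ∀ (u : List A) {b : A} {v : List A}, (b :: v) <+ u →
    (qbinAux u v).natDegree < (v.length + 1) + (qbinAux u (b :: v)).natDegree := by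
  intro u
  induction u with
  | nil => intro b v H; simp at H
  | cons c w ih =>
    intro b v H
    have hcases : ((b :: v) <+ w) ∨ (c = b ∧ v <+ w) := by
      cases H with
      | cons _ h' => exact Or.inl h'
      | cons_cons _ h' => exact Or.inr ⟨rfl, h'⟩
    have hvw : v <+ w := by
      rcases hcases with h' | ⟨_, h'⟩
      · exact List.sublist_of_cons_sublist h'
      · exact h'
    have hDbig : (qbinAux w v).natDegree ≤ (qbinAux (c :: w) (b :: v)).natDegree := by
      rcases hcases with h' | ⟨hcb, h'⟩
      · have h1 := ih h'
        have hne : (X ^ (v.length + 1) * qbinAux w (b :: v) : Polynomial ℕ) ≠ 0 :=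
          mul_ne_zero (pow_ne_zero _ X_ne_zero) (qbinAux_ne_zero h')
        have h2 : (v.length + 1) + (qbinAux w (b :: v)).natDegree
            ≤ (qbinAux (c :: w) (b :: v)).natDegree := by
          rw [qbinAux_cons_cons]
          refine le_trans (le_of_eq ?_) (natDegree_le_add_left hne)
          rw [natDegree_mul (pow_ne_zero _ X_ne_zero) (qbinAux_ne_zero h'), natDegree_X_pow]
        omega
      · rw [qbinAux_cons_cons, if_pos hcb]
        exact natDegree_le_add_right (qbinAux_ne_zero h')
    cases v with
    | nil => simp
    | cons e v' =>
      have hLHS : (qbinAux (c :: w) (e :: v')).natDegree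
          ≤ (v'.length + 1) + (qbinAux w (e :: v')).natDegree := by
        rw [qbinAux_cons_cons]
        refine (natDegree_add_le _ _).trans (max_le ?_ ?_)
        · refine natDegree_mul_le.trans ?_
          have h5 : ((X : Polynomial ℕ) ^ (v'.length + 1)).natDegree ≤ v'.length + 1 := by
            simpa using natDegree_pow_le (p := (X : Polynomial ℕ)) (n := v'.length + 1)
          omega
        · have h3 := ih hvw
          split
          · omega
          · simp
      simp only [List.length_cons]
      omega

lemma ntdGap : ∀ (u : List A) {b : A} {v : List A}, (b :: v) <+ u →
    (qbinAux u v).natTrailingDegree < (v.length + 1) + (qbinAux u (b :: v)).natTrailingDegree := by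
  intro u
  induction u with
  | nil => intro b v H; simp at H
  | cons c w ih =>
    intro b v H
    have hcases : ((b :: v) <+ w) ∨ (c = b ∧ v <+ w) := by
      cases H with
      | cons _ h' => exact Or.inl h'
      | cons_cons _ h' => exact Or.inr ⟨rfl, h'⟩
    have hvw : v <+ w := by
      rcases hcases with h' | ⟨_, h'⟩
      · exact List.sublist_of_cons_sublist h'
      · exact h'
    have hkey : (qbinAux w v).natTrailingDegree
        ≤ (qbinAux (c :: w) (b :: v)).natTrailingDegree := by
      rw [qbinAux_cons_cons]
      refine le_ntd_add (by rw [← qbinAux_cons_cons]; exact qbinAux_ne_zero H) ?_ ?_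
      · intro m hm
        by_cases hz : qbinAux w (b :: v) = 0
        · simp [hz]
        · have hbw : (b :: v) <+ w := sublist_of_qbinAux_ne_zero hz
          have h1 := ih hbw
          have h2 : m < (X ^ (v.length + 1) * qbinAux w (b :: v)).natTrailingDegree := by
            rw [ntd_X_pow_mul _ hz]; omega
          exact coeff_eq_zero_of_lt_natTrailingDegree h2
      · intro m hm
        split
        · exact coeff_eq_zero_of_lt_natTrailingDegree hm
        · simp
    cases v with
    | nil => simp
    | cons e v' =>
      have hLHS : (qbinAux (c :: w) (e :: v')).natTrailingDegree
          ≤ (v'.length + 1) + (qbinAux w (e :: v')).natTrailingDegree := by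
        rw [qbinAux_cons_cons]
        have hne : (X ^ (v'.length + 1) * qbinAux w (e :: v') : Polynomial ℕ) ≠ 0 :=
          mul_ne_zero (pow_ne_zero _ X_ne_zero) (qbinAux_ne_zero hvw)
        refine (ntd_add_le_left hne).trans (le_of_eq ?_)
        rw [ntd_X_pow_mul _ (qbinAux_ne_zero hvw)]
      simp only [List.length_cons]
      omega

lemma monic_qbinAux : ∀ (x : List A) {y : List A}, y <+ x → (qbinAux x y).Monic := by
  intro x
  induction x with
  | nil => intro y h; rw [List.sublist_nil.1 h]; simpa using monic_one
  | cons a u ih =>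
    intro y H
    cases y with
    | nil => simpa using monic_one
    | cons b v =>
      by_cases hbu : (b :: v) <+ u
      · rw [qbinAux_cons_cons]
        have hf : (X ^ (v.length + 1) * qbinAux u (b :: v)).Monic :=
          (monic_X_pow _).mul (ih hbu)
        refine hf.add_of_left ?_
        have hdf : (X ^ (v.length + 1) * qbinAux u (b :: v)).natDegree
            = (v.length + 1) + (qbinAux u (b :: v)).natDegree := by
          rw [natDegree_mul (pow_ne_zero _ X_ne_zero) (qbinAux_ne_zero hbu), natDegree_X_pow]
        have hdg : (if a = b then qbinAux u v else 0).natDegree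
            < (X ^ (v.length + 1) * qbinAux u (b :: v)).natDegree := by
          rw [hdf]
          have h1 := degGap u hbu
          split
          · omega
          · simp
        exact degree_lt_degree hdg
      · have hH : a = b ∧ v <+ u := by
          cases H with
          | cons _ h' => exact absurd h' hbu
          | cons_cons _ h' => exact ⟨rfl, h'⟩
        rw [qbinAux_cons_cons, qbinAux_eq_zero hbu, mul_zero, zero_add, if_pos hH.1]
        exact ih hH.2

@[simp] lemma tc_one : (1 : Polynomial ℕ).trailingCoeff = 1 := by
  rw [trailingCoeff, natTrailingDegree_one, coeff_one_zero]

lemma trailingCoeff_qbinAux : ∀ (x : List A) {y : List A},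
    y <+ x → (qbinAux x y).trailingCoeff = 1 := by
  intro x
  induction x with
  | nil => intro y h; rw [List.sublist_nil.1 h]; simp
  | cons a u ih =>
    intro y H
    cases y with
    | nil => simp
    | cons b v =>
      rw [qbinAux_cons_cons]
      by_cases hg : a = b ∧ v <+ u
      · rw [if_pos hg.1]
        by_cases hbu : (b :: v) <+ u
        · have hne : qbinAux u (b :: v) ≠ 0 := qbinAux_ne_zero hbu
          have hlt : (qbinAux u v).natTrailingDegree
              < (X ^ (v.length + 1) * qbinAux u (b :: v)).natTrailingDegree := by
            rw [ntd_X_pow_mul _ hne]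
            exact ntdGap u hbu
          rw [tc_add_of_lt (qbinAux_ne_zero hg.2) hlt]
          exact ih hg.2
        · rw [qbinAux_eq_zero hbu, mul_zero, zero_add]
          exact ih hg.2
      · have hbu : (b :: v) <+ u := by
          cases H with
          | cons _ h' => exact h'
          | cons_cons _ h' => exact absurd ⟨rfl, h'⟩ hg
        have hgz : (if a = b then qbinAux u v else 0) = 0 := by
          split
          · next hab => exact qbinAux_eq_zero (fun hs => hg ⟨hab, hs⟩)
          · rfl
        rw [hgz, add_zero, tc_X_pow_mul _ (qbinAux_ne_zero hbu)]
        exact ih hbu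

end QbinProof

/-- For `|v| ≤ |u|`: the degree of `binom_q(u,v)` is at most `|v|(|u|-|v|)`;
the coefficient of `q^{|v|(|u|-|v|)}` is `1` iff `v` is a prefix of `u` (else `0`);
the constant coefficient is `1` iff `v` is a suffix of `u` (else `0`);
and if `v` is a subword of `u`, then `binom_q(u,v)` is monic and its
lowest-degree nonzero coefficient is `1`. -/
theorem qbin_degree_and_extreme_coeffs (A : Type*) [Fintype A] [DecidableEq A]
    (u v : List A) (h : v.length ≤ u.length) :
    (qbin u v).natDegree ≤ v.length * (u.length - v.length) ∧
    (qbin u v).coeff (v.length * (u.length - v.length)) = (if v <+: u then 1 else 0) ∧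
    (qbin u v).coeff 0 = (if v <:+ u then 1 else 0) ∧
    (v.Sublist u → (qbin u v).leadingCoeff = 1 ∧ (qbin u v).trailingCoeff = 1) := by

  have hlen : v.reverse.length ≤ u.reverse.length := by simpa using h
  unfold qbin
  refine ⟨?_, ?_, ?_, ?_⟩
  · simpa using QbinProof.natDegree_qbinAux_le u.reverse v.reverse hlen
  · have h2 := QbinProof.coeff_top_qbinAux u.reverse v.reverse hlen
    simp only [List.length_reverse] at h2
    rw [h2]
    by_cases hp : v <+: u
    · rw [if_pos (List.reverse_suffix.2 hp), if_pos hp]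
    · rw [if_neg (fun hc => hp (List.reverse_suffix.1 hc)), if_neg hp]
  · rw [QbinProof.coeff_zero_qbinAux u.reverse v.reverse hlen]
    by_cases hp : v <:+ u
    · rw [if_pos (List.reverse_prefix.2 hp), if_pos hp]
    · rw [if_neg (fun hc => hp (List.reverse_prefix.1 hc)), if_neg hp]
  · intro hs
    have hs' : v.reverse.Sublist u.reverse := List.reverse_sublist.2 hs
    exact ⟨(QbinProof.monic_qbinAux _ hs').leadingCoeff,
      QbinProof.trailingCoeff_qbinAux _ hs'⟩
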